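/- Let n ≥ 3, let p ∈ (0, 1/(n−1)], let q ∈ (0,1), and let k be an integer with 1 ≤ k ≤ n. Suppose either (a) k ≥ 3 and q ≥ (n−2)p, or (b) p ≤ q < (n−2)p and ⌈ 2 + (n−2)p/q ⌉ ≤ k ≤ n. Then the maximum of P_θ(∑_{i=1}^n c_i ≥ k) over all pairwise independent distributions θ with marginal probabilities p_i = p for i ∈ [n−1] and p_n = q equals C(n−1,2)·p^2 / C(k−1,2), where C(m,2) = m(m−1)/2, and this maximum is attained by some such distribution θ. -/

import Mathlib

open Finset

noncomputable section

/-- Probability that at least `k` of the `n` coordinates equal `1` under the pmf `θ` on `{0,1}^n`. -/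
def probGE (n : ℕ) (θ : (Fin n → Bool) → ℝ) (k : ℕ) : ℝ :=
  ∑ c ∈ Finset.univ.filter
      (fun c : Fin n → Bool => k ≤ (Finset.univ.filter (fun i => c i = true)).card), θ c

/-- Probability that all `n` coordinates equal `1` under the pmf `θ` on `{0,1}^n`. -/
def probAll (n : ℕ) (θ : (Fin n → Bool) → ℝ) : ℝ :=
  ∑ c ∈ Finset.univ.filter (fun c : Fin n → Bool => ∀ i, c i = true), θ c

/-- `θ` is a probability mass function on `{0,1}^n`. -/
def IsDist (n : ℕ) (θ : (Fin n → Bool) → ℝ) : Prop :=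
  (∀ c, 0 ≤ θ c) ∧ (∑ c, θ c = 1)

/-- Univariate marginal probability `P_θ(c_i = 1)`. -/
def Marg (n : ℕ) (θ : (Fin n → Bool) → ℝ) (i : Fin n) : ℝ :=
  ∑ c ∈ Finset.univ.filter (fun c : Fin n → Bool => c i = true), θ c

/-- Bivariate probability `P_θ(c_i = 1, c_j = 1)`. -/
def Biv (n : ℕ) (θ : (Fin n → Bool) → ℝ) (i j : Fin n) : ℝ :=
  ∑ c ∈ Finset.univ.filter (fun c : Fin n → Bool => c i = true ∧ c j = true), θ c

/-- `θ` is a pairwise independent distribution with marginal vector `p`. -/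
def PairwiseIndep (n : ℕ) (p : Fin n → ℝ) (θ : (Fin n → Bool) → ℝ) : Prop :=
  IsDist n θ ∧ (∀ i, Marg n θ i = p i) ∧
    (∀ i j : Fin n, i < j → Biv n θ i j = p i * p j)

def Sset (n : ℕ) (c : Fin n → Bool) : Finset (Fin n) := univ.filter (fun i => c i = true)

lemma Sset_decide (n : ℕ) (s : Finset (Fin n)) : Sset n (fun i => decide (i ∈ s)) = s := by
  ext i; simp [Sset]

lemma sum_vec (n : ℕ) (f : Finset (Fin n) → ℝ) (Q : Finset (Fin n) → Prop) [DecidablePred Q] :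
    ∑ c ∈ univ.filter (fun c : Fin n → Bool => Q (Sset n c)), f (Sset n c)
      = ∑ s ∈ univ.filter Q, f s := by
  apply Finset.sum_nbij' (i := fun c => Sset n c) (j := fun s i => decide (i ∈ s))
  · intro c hc
    simp only [mem_filter, mem_univ, true_and] at hc ⊢; exact hc
  · intro s hs
    simp only [mem_filter, mem_univ, true_and, Sset_decide] at hs ⊢; exact hs
  · intro c _
    funext i
    rcases Bool.eq_false_or_eq_true (c i) with h | h <;> simp [Sset, h]
  · intro s _; exact Sset_decide n s
  · intro c _; rfl

lemma count_main (n : ℕ) (A B : Finset (Fin n)) (h : Disjoint A B) (r : ℕ) (hA : A.card ≤ r) :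
    ((univ : Finset (Finset (Fin n))).filter
        (fun s => s.card = r ∧ A ⊆ s ∧ Disjoint s B)).card
      = (n - A.card - B.card).choose (r - A.card) := by
  have hcard : ((A ∪ B)ᶜ : Finset (Fin n)).card = n - A.card - B.card := by
    rw [Finset.card_compl, Finset.card_union_of_disjoint h, Fintype.card_fin, Nat.sub_sub]
  rw [← hcard, ← Finset.card_powersetCard]
  apply Finset.card_nbij' (i := fun s => s \ A) (j := fun t => t ∪ A)
  · intro s hs
    simp only [Finset.mem_coe] at hs ⊢
    simp only [mem_filter, mem_univ, true_and] at hs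
    obtain ⟨hcard', hAs, hsB⟩ := hs
    rw [Finset.mem_powersetCard]
    constructor
    · intro x hx
      simp only [Finset.mem_sdiff] at hx
      simp only [Finset.mem_compl, Finset.mem_union]
      push_neg
      exact ⟨hx.2, fun hxB => (Finset.disjoint_left.mp hsB hx.1) hxB⟩
    · rw [Finset.card_sdiff_of_subset hAs, hcard']
  · intro t ht
    simp only [Finset.mem_coe] at ht ⊢
    rw [Finset.mem_powersetCard] at ht
    obtain ⟨htsub, htcard⟩ := ht
    have hdistA : Disjoint t A := by
      rw [Finset.disjoint_left]
      intro x hxt hxA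
      have := htsub hxt
      simp only [Finset.mem_compl, Finset.mem_union] at this
      exact this (Or.inl hxA)
    simp only [mem_filter, mem_univ, true_and]
    refine ⟨?_, Finset.subset_union_right, ?_⟩
    · rw [Finset.card_union_of_disjoint hdistA, htcard]
      omega
    · rw [Finset.disjoint_left]
      intro x hx hxB
      rcases Finset.mem_union.mp hx with h1 | h2
      · have := htsub h1
        simp only [Finset.mem_compl, Finset.mem_union] at this
        exact this (Or.inr hxB)
      · exact (Finset.disjoint_left.mp h h2) hxB
  · intro s hs
    simp only [Finset.mem_coe] at hs
    simp only [mem_filter, mem_univ, true_and] at hs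
    exact Finset.sdiff_union_of_subset hs.2.1
  · intro t ht
    simp only [Finset.mem_coe] at ht
    rw [Finset.mem_powersetCard] at ht
    apply Finset.union_sdiff_cancel_right
    rw [Finset.disjoint_left]
    intro x hxt hxA
    have := ht.1 hxt
    simp only [Finset.mem_compl, Finset.mem_union] at this
    exact this (Or.inl hxA)

def wfun (n k : ℕ) (L : Fin n) (A0 A1 B0 B1 E : ℝ) (s : Finset (Fin n)) : ℝ :=
  A0 * (if s = ∅ then 1 else 0) + A1 * (if s = {L} then 1 else 0)
  + B0 * (if s.card = 1 ∧ L ∉ s then 1 else 0)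
  + B1 * (if s.card = 2 ∧ L ∈ s then 1 else 0)
  + E * (if s.card = k ∧ L ∈ s then 1 else 0)

lemma sum_wfun (n k : ℕ) (L : Fin n) (A0 A1 B0 B1 E : ℝ)
    (Q : Finset (Fin n) → Prop) [DecidablePred Q] :
    ∑ s ∈ univ.filter Q, wfun n k L A0 A1 B0 B1 E s
      = A0 * ((univ.filter fun s => Q s ∧ s = ∅).card : ℝ)
      + A1 * ((univ.filter fun s => Q s ∧ s = {L}).card : ℝ)
      + B0 * ((univ.filter fun s => Q s ∧ (s.card = 1 ∧ L ∉ s)).card : ℝ)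
      + B1 * ((univ.filter fun s => Q s ∧ (s.card = 2 ∧ L ∈ s)).card : ℝ)
      + E * ((univ.filter fun s => Q s ∧ (s.card = k ∧ L ∈ s)).card : ℝ) := by
  simp only [wfun, Finset.sum_add_distrib, ← Finset.mul_sum, Finset.sum_boole,
    Finset.filter_filter]

lemma stat_eval (n k : ℕ) (L : Fin n) (A0 A1 B0 B1 E : ℝ)
    (Q : Finset (Fin n) → Prop) [DecidablePred Q]
    (R : (Fin n → Bool) → Prop) [DecidablePred R] (hQR : ∀ c, R c ↔ Q (Sset n c)) :
    ∑ c ∈ univ.filter R, wfun n k L A0 A1 B0 B1 E (Sset n c)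
      = A0 * ((univ.filter fun s => Q s ∧ s = ∅).card : ℝ)
      + A1 * ((univ.filter fun s => Q s ∧ s = {L}).card : ℝ)
      + B0 * ((univ.filter fun s => Q s ∧ (s.card = 1 ∧ L ∉ s)).card : ℝ)
      + B1 * ((univ.filter fun s => Q s ∧ (s.card = 2 ∧ L ∈ s)).card : ℝ)
      + E * ((univ.filter fun s => Q s ∧ (s.card = k ∧ L ∈ s)).card : ℝ) := by
  rw [← sum_wfun, ← sum_vec]
  apply Finset.sum_congr
  · apply Finset.filter_congr
    intro c _
    exact (hQR c).trans Iff.rfl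
  · intros; rfl

lemma sq_sub_mono {x y : ℕ} (h : x ≤ y) : x * x - x ≤ y * y - y := by
  have ex : ∀ z : ℕ, z * z - z = z * (z - 1) := by
    intro z
    cases z with
    | zero => simp
    | succ m =>
      have h1 : (m + 1) * (m + 1) = (m + 1) * m + (m + 1) := by ring
      have h2 : (m + 1) * (m + 1 - 1) = (m + 1) * m := by norm_num
      omega
  rw [ex x, ex y]
  exact Nat.mul_le_mul h (by omega)


set_option maxHeartbeats 3200000 in
lemma construction (n k : ℕ) (hn : 3 ≤ n) (hk3 : 3 ≤ k) (hkn : k ≤ n)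
    (p q : ℝ) (hp0 : 0 < p) (hp1 : ((n : ℝ) - 1) * p ≤ 1) (hq0 : 0 < q) (hq1 : q < 1)
    (hkey : ((n : ℝ) - 2) * p ≤ q * ((k : ℝ) - 2)) :
    ∃ θ : (Fin n → Bool) → ℝ,
      PairwiseIndep n (fun i : Fin n => if (i : ℕ) < n - 1 then p else q) θ ∧
        probGE n θ k =
          ((((n : ℝ) - 1) * ((n : ℝ) - 2) / 2 * p ^ 2) / (((k : ℝ) - 1) * ((k : ℝ) - 2) / 2)) := by

  have hn1 : (2:ℝ) ≤ (n:ℝ) - 1 := by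
    have : (3:ℝ) ≤ (n:ℝ) := by exact_mod_cast hn
    linarith
  have hn2 : (1:ℝ) ≤ (n:ℝ) - 2 := by linarith
  have hk1 : (2:ℝ) ≤ (k:ℝ) - 1 := by
    have : (3:ℝ) ≤ (k:ℝ) := by exact_mod_cast hk3
    linarith
  have hk2 : (1:ℝ) ≤ (k:ℝ) - 2 := by
    have : (3:ℝ) ≤ (k:ℝ) := by exact_mod_cast hk3
    linarith
  have hn1ne : ((n:ℝ) - 1) ≠ 0 := by linarith
  have hk1ne : ((k:ℝ) - 1) ≠ 0 := by linarith
  have hk2ne : ((k:ℝ) - 2) ≠ 0 := by linarith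
  obtain ⟨L, hLdef⟩ : ∃ L : Fin n, L = ⟨n - 1, by omega⟩ := ⟨_, rfl⟩
  obtain ⟨d, hd⟩ : ∃ x : ℝ,
      x = (((n : ℝ) - 1) * ((n : ℝ) - 2) / 2 * p ^ 2) / (((k : ℝ) - 1) * ((k : ℝ) - 2) / 2) :=
    ⟨_, rfl⟩
  obtain ⟨C, hC⟩ : ∃ x : ℝ, x = (((n-1).choose (k-1) : ℕ) : ℝ) := ⟨_, rfl⟩
  have hCpos : 0 < C := by
    rw [hC]
    exact_mod_cast Nat.choose_pos (by omega : k - 1 ≤ n - 1)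
  have hCne : C ≠ 0 := ne_of_gt hCpos
  have hdval : d * (((k:ℝ) - 1) * ((k:ℝ) - 2)) = ((n:ℝ) - 1) * ((n:ℝ) - 2) * p ^ 2 := by
    rw [hd]; field_simp
  have hd0 : 0 ≤ d := by
    rw [hd]
    apply div_nonneg
    · exact mul_nonneg (by nlinarith) (sq_nonneg p)
    · nlinarith
  obtain ⟨A0, hA0⟩ : ∃ x : ℝ, x = (1 - q) * (1 - ((n:ℝ) - 1) * p) := ⟨_, rfl⟩
  obtain ⟨A1, hA1⟩ : ∃ x : ℝ, x = q * (1 - ((n:ℝ) - 1) * p) + d * ((k:ℝ) - 2) := ⟨_, rfl⟩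
  obtain ⟨B0, hB0⟩ : ∃ x : ℝ, x = p * (1 - q) := ⟨_, rfl⟩
  obtain ⟨B1, hB1⟩ : ∃ x : ℝ, x = (((n:ℝ) - 1) * p * q - d * ((k:ℝ) - 1)) / ((n:ℝ) - 1) := ⟨_, rfl⟩
  obtain ⟨E, hE⟩ : ∃ x : ℝ, x = d / C := ⟨_, rfl⟩
  -- nonnegativity of coefficients
  have hb1num : 0 ≤ ((n:ℝ) - 1) * p * q - d * ((k:ℝ) - 1) := by
    have h1 : (((n:ℝ) - 1) * p * q - d * ((k:ℝ) - 1)) * ((k:ℝ) - 2)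
        = ((n:ℝ) - 1) * p * (q * ((k:ℝ) - 2) - ((n:ℝ) - 2) * p) := by
      linear_combination -hdval
    have h2 : 0 ≤ (((n:ℝ) - 1) * p * q - d * ((k:ℝ) - 1)) * ((k:ℝ) - 2) := by
      rw [h1]
      have := sub_nonneg.mpr hkey
      positivity
    nlinarith
  have h1np : 0 ≤ 1 - ((n:ℝ)-1)*p := by linarith
  have hA0n : 0 ≤ A0 := by
    rw [hA0]; exact mul_nonneg (by linarith) h1np
  have hA1n : 0 ≤ A1 := by
    rw [hA1]
    exact add_nonneg (mul_nonneg hq0.le h1np) (mul_nonneg hd0 (by linarith))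
  have hB0n : 0 ≤ B0 := by rw [hB0]; exact mul_nonneg hp0.le (by linarith)
  have hB1n : 0 ≤ B1 := by
    rw [hB1]; exact div_nonneg hb1num (by linarith)
  have hEn : 0 ≤ E := by rw [hE]; positivity
  -- the Nat combinatorial identities
  have Id1 : (n-1) * ((n-2).choose (k-2)) = ((n-1).choose (k-1)) * (k-1) := by
    have h := Nat.add_one_mul_choose_eq (n-2) (k-2)
    have e1 : (n-2) + 1 = n - 1 := by omega
    have e2 : (k-2) + 1 = k - 1 := by omega
    rw [e1, e2] at h
    exact h
  have Id1' : (n-2) * ((n-3).choose (k-3)) = ((n-2).choose (k-2)) * (k-2) := by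
    have h := Nat.add_one_mul_choose_eq (n-3) (k-3)
    have e1 : (n-3) + 1 = n - 2 := by omega
    have e2 : (k-3) + 1 = k - 2 := by omega
    rw [e1, e2] at h
    exact h
  have Id2 : ((n-1)*(n-2)) * ((n-3).choose (k-3)) = ((n-1).choose (k-1)) * ((k-1)*(k-2)) := by
    calc ((n-1)*(n-2)) * ((n-3).choose (k-3)) = (n-1)*((n-2)*((n-3).choose (k-3))) := by ring
    _ = (n-1)*(((n-2).choose (k-2))*(k-2)) := by rw [Id1']
    _ = ((n-1)*((n-2).choose (k-2)))*(k-2) := by ring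
    _ = (((n-1).choose (k-1))*(k-1))*(k-2) := by rw [Id1]
    _ = _ := by ring
  have en1 : ((n - 1 : ℕ) : ℝ) = (n:ℝ) - 1 := by
    rw [Nat.cast_sub (by omega : 1 ≤ n)]; norm_num
  have en2 : ((n - 2 : ℕ) : ℝ) = (n:ℝ) - 2 := by
    rw [Nat.cast_sub (by omega : 2 ≤ n)]; norm_num
  have ek1 : ((k - 1 : ℕ) : ℝ) = (k:ℝ) - 1 := by
    rw [Nat.cast_sub (by omega : 1 ≤ k)]; norm_num
  have ek2 : ((k - 2 : ℕ) : ℝ) = (k:ℝ) - 2 := by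
    rw [Nat.cast_sub (by omega : 2 ≤ k)]; norm_num
  have R1 : ((n:ℝ) - 1) * (((n-2).choose (k-2) : ℕ) : ℝ) = C * ((k:ℝ) - 1) := by
    have h := congrArg (fun x : ℕ => (x : ℝ)) Id1
    push_cast at h
    rw [en1, ek1] at h
    rw [hC]; exact_mod_cast h
  have R2 : (((n:ℝ) - 1) * ((n:ℝ) - 2)) * (((n-3).choose (k-3) : ℕ) : ℝ)
      = C * (((k:ℝ) - 1) * ((k:ℝ) - 2)) := by
    have h := congrArg (fun x : ℕ => (x : ℝ)) Id2
    push_cast at h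
    rw [en1, en2, ek1, ek2] at h
    rw [hC]; exact_mod_cast h

  obtain ⟨X, hX⟩ : ∃ x : ℝ, x = (((n-2).choose (k-2) : ℕ) : ℝ) := ⟨_, rfl⟩
  obtain ⟨Y, hY⟩ : ∃ x : ℝ, x = (((n-3).choose (k-3) : ℕ) : ℝ) := ⟨_, rfl⟩
  have hn12ne : (((n:ℝ)-1) * ((n:ℝ)-2)) ≠ 0 := mul_ne_zero hn1ne (by linarith)
  have hXval : X = C * ((k:ℝ)-1) / ((n:ℝ)-1) := by
    rw [hX, eq_div_iff hn1ne]; linarith [R1]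
  have hYval : Y = C * (((k:ℝ)-1)*((k:ℝ)-2)) / (((n:ℝ)-1)*((n:ℝ)-2)) := by
    rw [hY, eq_div_iff hn12ne]; linarith [R2]
  have hEX : E * X = d * ((k:ℝ)-1) / ((n:ℝ)-1) := by
    rw [hE, hXval]; field_simp
  have hEY : E * Y = p^2 := by
    rw [hE, hYval]; field_simp; linear_combination hdval
  have hEC : E * C = d := by rw [hE, div_mul_cancel₀ _ hCne]
  have hLval : (L : ℕ) = n - 1 := by rw [hLdef]
  -- count lemmas
  have c0 : ((univ.filter fun s : Finset (Fin n) => s = ∅).card : ℝ) = 1 := by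
    rw [Finset.filter_eq']; simp
  have cLs : ((univ.filter fun s : Finset (Fin n) => s = {L}).card : ℝ) = 1 := by
    rw [Finset.filter_eq']; simp
  have c1 : ((univ.filter fun s : Finset (Fin n) => s.card = 1 ∧ L ∉ s).card : ℝ) = (n:ℝ) - 1 := by
    have e : (univ.filter fun s : Finset (Fin n) => s.card = 1 ∧ L ∉ s)
        = univ.filter (fun s : Finset (Fin n) => s.card = 1 ∧ (∅ : Finset (Fin n)) ⊆ s ∧ Disjoint s {L}) := by
      apply Finset.filter_congr; intro s _
      simp [Finset.disjoint_singleton_right]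
    rw [e, count_main n ∅ {L} (by simp) 1 (by simp)]
    simp [Nat.choose_one_right, en1]
  have c2 : ((univ.filter fun s : Finset (Fin n) => s.card = 2 ∧ L ∈ s).card : ℝ) = (n:ℝ) - 1 := by
    have e : (univ.filter fun s : Finset (Fin n) => s.card = 2 ∧ L ∈ s)
        = univ.filter (fun s : Finset (Fin n) => s.card = 2 ∧ ({L} : Finset (Fin n)) ⊆ s ∧ Disjoint s ∅) := by
      apply Finset.filter_congr; intro s _
      simp [Finset.singleton_subset_iff]
    rw [e, count_main n {L} ∅ (by simp) 2 (by simp)]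
    simp [Nat.choose_one_right, en1]
  have ckk : ((univ.filter fun s : Finset (Fin n) => s.card = k ∧ L ∈ s).card : ℝ) = C := by
    have e : (univ.filter fun s : Finset (Fin n) => s.card = k ∧ L ∈ s)
        = univ.filter (fun s : Finset (Fin n) => s.card = k ∧ ({L} : Finset (Fin n)) ⊆ s ∧ Disjoint s ∅) := by
      apply Finset.filter_congr; intro s _
      simp [Finset.singleton_subset_iff]
    rw [e, count_main n {L} ∅ (by simp) k (by simp; omega)]
    rw [hC]; norm_num
  -- the distribution
  refine ⟨fun c => wfun n k L A0 A1 B0 B1 E (Sset n c), ⟨⟨?_, ?_⟩, ?_, ?_⟩, ?_⟩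
  · -- nonnegativity
    intro c
    show (0:ℝ) ≤ wfun n k L A0 A1 B0 B1 E (Sset n c)
    unfold wfun
    have h01 : ∀ P : Prop, ∀ inst : Decidable P, (0:ℝ) ≤ if P then 1 else 0 := by
      intro P inst; split_ifs <;> norm_num
    refine add_nonneg (add_nonneg (add_nonneg (add_nonneg ?_ ?_) ?_) ?_) ?_ <;>
      exact mul_nonneg (by assumption) (h01 _ _)
  · -- sums to 1
    have h := stat_eval n k L A0 A1 B0 B1 E (fun _ => True) (fun _ => True) (fun c => Iff.rfl)
    rw [Finset.filter_true] at h
    simp only [true_and] at h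
    show ∑ c : Fin n → Bool, wfun n k L A0 A1 B0 B1 E (Sset n c) = 1
    rw [h, c0, cLs, c1, c2, ckk, hA0, hA1, hB0, hB1, hE]
    field_simp
    ring
  · -- marginals
    intro i
    show Marg n (fun c => wfun n k L A0 A1 B0 B1 E (Sset n c)) i
        = if (i : ℕ) < n - 1 then p else q
    by_cases hiv : (i : ℕ) < n - 1
    · rw [if_pos hiv]
      have hiL : i ≠ L := by
        intro hcon; rw [hcon, hLdef] at hiv; simp at hiv
      have h := stat_eval n k L A0 A1 B0 B1 E (fun s => i ∈ s)
        (fun c => c i = true) (fun c => by simp [Sset])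
      have z0 : (univ.filter fun s : Finset (Fin n) => i ∈ s ∧ s = ∅) = ∅ := by
        rw [Finset.filter_eq_empty_iff]; rintro s - ⟨h1, rfl⟩; simp at h1
      have zL : (univ.filter fun s : Finset (Fin n) => i ∈ s ∧ s = {L}) = ∅ := by
        rw [Finset.filter_eq_empty_iff]; rintro s - ⟨h1, rfl⟩
        rw [Finset.mem_singleton] at h1; exact hiL h1
      have z1 : ((univ.filter fun s : Finset (Fin n) =>
          i ∈ s ∧ (s.card = 1 ∧ L ∉ s)).card : ℝ) = 1 := by
        have e : (univ.filter fun s : Finset (Fin n) => i ∈ s ∧ (s.card = 1 ∧ L ∉ s))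
            = univ.filter (fun s : Finset (Fin n) =>
                s.card = 1 ∧ ({i} : Finset (Fin n)) ⊆ s ∧ Disjoint s {L}) := by
          apply Finset.filter_congr; intro s _
          simp only [Finset.singleton_subset_iff, Finset.disjoint_singleton_right]
          tauto
        rw [e, count_main n {i} {L} (by simp only [Finset.disjoint_singleton]; exact hiL) 1 (by simp)]
        simp
      have hcard2 : ({i, L} : Finset (Fin n)).card = 2 := by
        rw [Finset.card_insert_of_notMem (by simp [hiL]), Finset.card_singleton]
      have z2 : ((univ.filter fun s : Finset (Fin n) =>
          i ∈ s ∧ (s.card = 2 ∧ L ∈ s)).card : ℝ) = 1 := by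
        have e : (univ.filter fun s : Finset (Fin n) => i ∈ s ∧ (s.card = 2 ∧ L ∈ s))
            = univ.filter (fun s : Finset (Fin n) =>
                s.card = 2 ∧ ({i, L} : Finset (Fin n)) ⊆ s ∧ Disjoint s ∅) := by
          apply Finset.filter_congr; intro s _
          simp only [Finset.insert_subset_iff, Finset.singleton_subset_iff,
            Finset.disjoint_empty_right, and_true]
          tauto
        rw [e, count_main n {i, L} ∅ (by simp) 2 (le_of_eq hcard2), hcard2]
        simp
      have zk : ((univ.filter fun s : Finset (Fin n) =>
          i ∈ s ∧ (s.card = k ∧ L ∈ s)).card : ℝ) = X := by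
        have e : (univ.filter fun s : Finset (Fin n) => i ∈ s ∧ (s.card = k ∧ L ∈ s))
            = univ.filter (fun s : Finset (Fin n) =>
                s.card = k ∧ ({i, L} : Finset (Fin n)) ⊆ s ∧ Disjoint s ∅) := by
          apply Finset.filter_congr; intro s _
          simp only [Finset.insert_subset_iff, Finset.singleton_subset_iff,
            Finset.disjoint_empty_right, and_true]
          tauto
        rw [e, count_main n {i, L} ∅ (by simp) k (by omega), hcard2, hX]
        norm_num
      rw [Marg] at *
      rw [h, z0, zL, z1, z2, zk]
      simp only [Finset.card_empty, Nat.cast_zero, mul_zero, mul_one, zero_add]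
      rw [hEX, hB0, hB1]
      field_simp
      ring
    · rw [if_neg hiv]
      have hiL : i = L := by
        rw [hLdef]; apply Fin.ext; simp only []
        have := i.isLt; omega
      rw [hiL]
      have h := stat_eval n k L A0 A1 B0 B1 E (fun s => L ∈ s)
        (fun c => c L = true) (fun c => by simp [Sset])
      have y0 : (univ.filter fun s : Finset (Fin n) => L ∈ s ∧ s = ∅) = ∅ := by
        rw [Finset.filter_eq_empty_iff]; rintro s - ⟨h1, rfl⟩; simp at h1
      have yL : ((univ.filter fun s : Finset (Fin n) => L ∈ s ∧ s = {L}).card : ℝ) = 1 := by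
        have e : (univ.filter fun s : Finset (Fin n) => L ∈ s ∧ s = {L})
            = univ.filter (fun s : Finset (Fin n) => s = {L}) := by
          apply Finset.filter_congr; intro s _
          constructor
          · exact fun h' => h'.2
          · rintro rfl; simp
        rw [e, Finset.filter_eq']; simp
      have y1 : (univ.filter fun s : Finset (Fin n) => L ∈ s ∧ (s.card = 1 ∧ L ∉ s)) = ∅ := by
        rw [Finset.filter_eq_empty_iff]; rintro s - ⟨h1, -, h3⟩; exact h3 h1
      have y2 : ((univ.filter fun s : Finset (Fin n) =>
          L ∈ s ∧ (s.card = 2 ∧ L ∈ s)).card : ℝ) = (n:ℝ) - 1 := by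
        have e : (univ.filter fun s : Finset (Fin n) => L ∈ s ∧ (s.card = 2 ∧ L ∈ s))
            = univ.filter (fun s : Finset (Fin n) =>
                s.card = 2 ∧ ({L} : Finset (Fin n)) ⊆ s ∧ Disjoint s ∅) := by
          apply Finset.filter_congr; intro s _
          simp only [Finset.singleton_subset_iff, Finset.disjoint_empty_right, and_true]
          tauto
        rw [e, count_main n {L} ∅ (by simp) 2 (by simp)]
        simp [Nat.choose_one_right, en1]
      have yk : ((univ.filter fun s : Finset (Fin n) =>
          L ∈ s ∧ (s.card = k ∧ L ∈ s)).card : ℝ) = C := by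
        have e : (univ.filter fun s : Finset (Fin n) => L ∈ s ∧ (s.card = k ∧ L ∈ s))
            = univ.filter (fun s : Finset (Fin n) =>
                s.card = k ∧ ({L} : Finset (Fin n)) ⊆ s ∧ Disjoint s ∅) := by
          apply Finset.filter_congr; intro s _
          simp only [Finset.singleton_subset_iff, Finset.disjoint_empty_right, and_true]
          tauto
        rw [e, count_main n {L} ∅ (by simp) k (by simp; omega), hC]
        norm_num
      rw [Marg] at *
      rw [h, y0, yL, y1, y2, yk]
      simp only [Finset.card_empty, Nat.cast_zero, mul_zero, mul_one, zero_add, add_zero]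
      rw [hEC, hA1, hB1]
      field_simp
      ring
  · -- bivariate
    intro i j hij
    have hij' : (i : ℕ) < (j : ℕ) := hij
    have hijne : i ≠ j := ne_of_lt hij
    have hjn : (j : ℕ) < n := j.isLt
    show Biv n (fun c => wfun n k L A0 A1 B0 B1 E (Sset n c)) i j
        = (if (i : ℕ) < n - 1 then p else q) * (if (j : ℕ) < n - 1 then p else q)
    have hiv : (i : ℕ) < n - 1 := by omega
    have hiL : i ≠ L := by
      intro hcon; rw [hcon, hLdef] at hiv; simp at hiv
    rw [if_pos hiv]
    by_cases hjv : (j : ℕ) < n - 1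
    · rw [if_pos hjv]
      have hjL : j ≠ L := by
        intro hcon; rw [hcon, hLdef] at hjv; simp at hjv
      have hcard3 : ({i, j, L} : Finset (Fin n)).card = 3 := by
        rw [Finset.card_insert_of_notMem (by simp [hijne, hiL]),
          Finset.card_insert_of_notMem (by simp [hjL]), Finset.card_singleton]
      have h := stat_eval n k L A0 A1 B0 B1 E (fun s => i ∈ s ∧ j ∈ s)
        (fun c => c i = true ∧ c j = true) (fun c => by simp [Sset])
      have w0 : (univ.filter fun s : Finset (Fin n) => (i ∈ s ∧ j ∈ s) ∧ s = ∅) = ∅ := by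
        rw [Finset.filter_eq_empty_iff]; rintro s - ⟨⟨h1, -⟩, rfl⟩; simp at h1
      have wL : (univ.filter fun s : Finset (Fin n) => (i ∈ s ∧ j ∈ s) ∧ s = {L}) = ∅ := by
        rw [Finset.filter_eq_empty_iff]; rintro s - ⟨⟨h1, -⟩, rfl⟩
        rw [Finset.mem_singleton] at h1; exact hiL h1
      have w1 : (univ.filter fun s : Finset (Fin n) =>
          (i ∈ s ∧ j ∈ s) ∧ (s.card = 1 ∧ L ∉ s)) = ∅ := by
        rw [Finset.filter_eq_empty_iff]; rintro s - ⟨⟨h1, h2⟩, h3, -⟩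
        have := Finset.one_lt_card.mpr ⟨i, h1, j, h2, hijne⟩
        omega
      have w2 : (univ.filter fun s : Finset (Fin n) =>
          (i ∈ s ∧ j ∈ s) ∧ (s.card = 2 ∧ L ∈ s)) = ∅ := by
        rw [Finset.filter_eq_empty_iff]; rintro s - ⟨⟨h1, h2⟩, h3, h4⟩
        have hsub : ({i, j, L} : Finset (Fin n)) ⊆ s := by
          simp [Finset.insert_subset_iff, h1, h2, h4]
        have := Finset.card_le_card hsub
        omega
      have wk : ((univ.filter fun s : Finset (Fin n) =>
          (i ∈ s ∧ j ∈ s) ∧ (s.card = k ∧ L ∈ s)).card : ℝ) = Y := by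
        have e : (univ.filter fun s : Finset (Fin n) =>
            (i ∈ s ∧ j ∈ s) ∧ (s.card = k ∧ L ∈ s))
            = univ.filter (fun s : Finset (Fin n) =>
                s.card = k ∧ ({i, j, L} : Finset (Fin n)) ⊆ s ∧ Disjoint s ∅) := by
          apply Finset.filter_congr; intro s _
          simp only [Finset.insert_subset_iff, Finset.singleton_subset_iff,
            Finset.disjoint_empty_right, and_true]
          tauto
        rw [e, count_main n {i, j, L} ∅ (by simp) k (by omega), hcard3, hY]
        norm_num
      rw [Biv] at *
      rw [h, w0, wL, w1, w2, wk]
      simp only [Finset.card_empty, Nat.cast_zero, mul_zero, zero_add]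
      rw [hEY]; ring
    · rw [if_neg hjv]
      have hjL : j = L := by
        rw [hLdef]; apply Fin.ext; simp only []
        omega
      rw [hjL]
      have h := stat_eval n k L A0 A1 B0 B1 E (fun s => i ∈ s ∧ L ∈ s)
        (fun c => c i = true ∧ c L = true) (fun c => by simp [Sset])
      have v0 : (univ.filter fun s : Finset (Fin n) => (i ∈ s ∧ L ∈ s) ∧ s = ∅) = ∅ := by
        rw [Finset.filter_eq_empty_iff]; rintro s - ⟨⟨h1, -⟩, rfl⟩; simp at h1
      have vL : (univ.filter fun s : Finset (Fin n) => (i ∈ s ∧ L ∈ s) ∧ s = {L}) = ∅ := by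
        rw [Finset.filter_eq_empty_iff]; rintro s - ⟨⟨h1, -⟩, rfl⟩
        rw [Finset.mem_singleton] at h1; exact hiL h1
      have v1 : (univ.filter fun s : Finset (Fin n) =>
          (i ∈ s ∧ L ∈ s) ∧ (s.card = 1 ∧ L ∉ s)) = ∅ := by
        rw [Finset.filter_eq_empty_iff]; rintro s - ⟨⟨-, h2⟩, -, h3⟩; exact h3 h2
      have hcard2 : ({i, L} : Finset (Fin n)).card = 2 := by
        rw [Finset.card_insert_of_notMem (by simp [hiL]), Finset.card_singleton]
      have v2 : ((univ.filter fun s : Finset (Fin n) =>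
          (i ∈ s ∧ L ∈ s) ∧ (s.card = 2 ∧ L ∈ s)).card : ℝ) = 1 := by
        have e : (univ.filter fun s : Finset (Fin n) => (i ∈ s ∧ L ∈ s) ∧ (s.card = 2 ∧ L ∈ s))
            = univ.filter (fun s : Finset (Fin n) =>
                s.card = 2 ∧ ({i, L} : Finset (Fin n)) ⊆ s ∧ Disjoint s ∅) := by
          apply Finset.filter_congr; intro s _
          simp only [Finset.insert_subset_iff, Finset.singleton_subset_iff,
            Finset.disjoint_empty_right, and_true]
          tauto
        rw [e, count_main n {i, L} ∅ (by simp) 2 (le_of_eq hcard2), hcard2]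
        simp
      have vk : ((univ.filter fun s : Finset (Fin n) =>
          (i ∈ s ∧ L ∈ s) ∧ (s.card = k ∧ L ∈ s)).card : ℝ) = X := by
        have e : (univ.filter fun s : Finset (Fin n) => (i ∈ s ∧ L ∈ s) ∧ (s.card = k ∧ L ∈ s))
            = univ.filter (fun s : Finset (Fin n) =>
                s.card = k ∧ ({i, L} : Finset (Fin n)) ⊆ s ∧ Disjoint s ∅) := by
          apply Finset.filter_congr; intro s _
          simp only [Finset.insert_subset_iff, Finset.singleton_subset_iff,
            Finset.disjoint_empty_right, and_true]
          tauto
        rw [e, count_main n {i, L} ∅ (by simp) k (by omega), hcard2, hX]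
        norm_num
      rw [Biv] at *
      rw [h, v0, vL, v1, v2, vk]
      simp only [Finset.card_empty, Nat.cast_zero, mul_zero, mul_one, zero_add]
      rw [hEX, hB1]
      field_simp
      ring
  · -- probGE
    show probGE n (fun c => wfun n k L A0 A1 B0 B1 E (Sset n c)) k
        = (((n : ℝ) - 1) * ((n : ℝ) - 2) / 2 * p ^ 2) / (((k : ℝ) - 1) * ((k : ℝ) - 2) / 2)
    have h := stat_eval n k L A0 A1 B0 B1 E (fun s => k ≤ s.card)
      (fun c => k ≤ (Finset.univ.filter (fun i => c i = true)).card) (fun c => Iff.rfl)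
    have u0 : (univ.filter fun s : Finset (Fin n) => k ≤ s.card ∧ s = ∅) = ∅ := by
      rw [Finset.filter_eq_empty_iff]; rintro s - ⟨h1, rfl⟩
      simp only [Finset.card_empty] at h1; omega
    have uL : (univ.filter fun s : Finset (Fin n) => k ≤ s.card ∧ s = {L}) = ∅ := by
      rw [Finset.filter_eq_empty_iff]; rintro s - ⟨h1, rfl⟩
      rw [Finset.card_singleton] at h1; omega
    have u1 : (univ.filter fun s : Finset (Fin n) =>
        k ≤ s.card ∧ (s.card = 1 ∧ L ∉ s)) = ∅ := by
      rw [Finset.filter_eq_empty_iff]; rintro s - ⟨h1, h2, -⟩; omega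
    have u2 : (univ.filter fun s : Finset (Fin n) =>
        k ≤ s.card ∧ (s.card = 2 ∧ L ∈ s)) = ∅ := by
      rw [Finset.filter_eq_empty_iff]; rintro s - ⟨h1, h2, -⟩; omega
    have uk : ((univ.filter fun s : Finset (Fin n) =>
        k ≤ s.card ∧ (s.card = k ∧ L ∈ s)).card : ℝ) = C := by
      have e : (univ.filter fun s : Finset (Fin n) => k ≤ s.card ∧ (s.card = k ∧ L ∈ s))
          = univ.filter (fun s : Finset (Fin n) =>
              s.card = k ∧ ({L} : Finset (Fin n)) ⊆ s ∧ Disjoint s ∅) := by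
        apply Finset.filter_congr; intro s _
        constructor
        · rintro ⟨h1, h2, h3⟩
          exact ⟨h2, Finset.singleton_subset_iff.mpr h3, Finset.disjoint_empty_right _⟩
        · rintro ⟨h2, h3, -⟩
          exact ⟨le_of_eq h2.symm, h2, Finset.singleton_subset_iff.mp h3⟩
      rw [e, count_main n {L} ∅ (by simp) k (by simp; omega), hC]
      norm_num
    rw [probGE] at *
    rw [h, u0, uL, u1, u2, uk]
    simp only [Finset.card_empty, Nat.cast_zero, mul_zero, zero_add]
    rw [hEC, hd]

set_option maxHeartbeats 1600000 in
lemma upper (n k : ℕ) (hn : 3 ≤ n) (hk3 : 3 ≤ k)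
    (p q : ℝ) (hp0 : 0 ≤ p)
    (θ : (Fin n → Bool) → ℝ)
    (hθ : PairwiseIndep n (fun i : Fin n => if (i : ℕ) < n - 1 then p else q) θ) :
    probGE n θ k ≤
      (((n : ℝ) - 1) * ((n : ℝ) - 2) / 2 * p ^ 2) / (((k : ℝ) - 1) * ((k : ℝ) - 2) / 2) := by
  obtain ⟨⟨hnn, hsum⟩, hmarg, hbiv⟩ := hθ
  have hn1 : (2:ℝ) ≤ (n:ℝ) - 1 := by
    have : (3:ℝ) ≤ (n:ℝ) := by exact_mod_cast hn
    linarith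
  have hk1 : (2:ℝ) ≤ (k:ℝ) - 1 := by
    have : (3:ℝ) ≤ (k:ℝ) := by exact_mod_cast hk3
    linarith
  have hk2 : (1:ℝ) ≤ (k:ℝ) - 2 := by linarith
  obtain ⟨L, hLdef⟩ : ∃ L : Fin n, L = ⟨n - 1, by omega⟩ := ⟨_, rfl⟩
  obtain ⟨D, hD⟩ : ∃ D : Finset (Fin n), D = univ.erase L := ⟨_, rfl⟩
  have hvalL : (L : ℕ) = n - 1 := by rw [hLdef]
  have hne_lt : ∀ i : Fin n, i ≠ L → (i : ℕ) < n - 1 := by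
    intro i hi
    have h1 := i.isLt
    by_contra hcon
    exact hi (Fin.ext (by omega))
  -- each bivariate term over pairs in D equals p^2
  have hbiv' : ∀ z ∈ D.offDiag, Biv n θ z.1 z.2 = p ^ 2 := by
    intro z hz
    rw [hD, Finset.mem_offDiag] at hz
    obtain ⟨hz1, hz2, hzne⟩ := hz
    have h1 : (z.1 : ℕ) < n - 1 := hne_lt _ (Finset.mem_erase.mp hz1).1
    have h2 : (z.2 : ℕ) < n - 1 := hne_lt _ (Finset.mem_erase.mp hz2).1
    have hsymm : Biv n θ z.1 z.2 = Biv n θ z.2 z.1 := by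
      rw [Biv, Biv]
      apply Finset.sum_congr _ (fun _ _ => rfl)
      apply Finset.filter_congr
      intro c _
      exact and_comm
    rcases lt_trichotomy z.1 z.2 with hlt | heq | hgt
    · rw [hbiv _ _ hlt]; simp only [h1, h2, if_true]; ring
    · exact absurd heq hzne
    · rw [hsymm, hbiv _ _ hgt]; simp only [h1, h2, if_true]; ring
  -- double counting
  have key : ∑ z ∈ D.offDiag, Biv n θ z.1 z.2
      = ∑ c : Fin n → Bool, θ c * (((Sset n c ∩ D).offDiag.card : ℕ) : ℝ) := by
    calc ∑ z ∈ D.offDiag, Biv n θ z.1 z.2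
        = ∑ z ∈ D.offDiag, ∑ c : Fin n → Bool,
            (if z.1 ∈ Sset n c ∧ z.2 ∈ Sset n c then θ c else 0) := by
          apply Finset.sum_congr rfl
          intro z _
          rw [Biv]
          rw [show (Finset.univ.filter (fun c : Fin n → Bool => c z.1 = true ∧ c z.2 = true))
              = (Finset.univ.filter
                  (fun c : Fin n → Bool => z.1 ∈ Sset n c ∧ z.2 ∈ Sset n c)) from
            Finset.filter_congr (by intro c _; simp [Sset])]
          rw [Finset.sum_filter]
      _ = ∑ c : Fin n → Bool, ∑ z ∈ D.offDiag,
            (if z.1 ∈ Sset n c ∧ z.2 ∈ Sset n c then θ c else 0) := Finset.sum_comm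
      _ = ∑ c : Fin n → Bool, θ c * (((Sset n c ∩ D).offDiag.card : ℕ) : ℝ) := by
          apply Finset.sum_congr rfl
          intro c _
          rw [← Finset.sum_filter]
          rw [show (D.offDiag.filter (fun z => z.1 ∈ Sset n c ∧ z.2 ∈ Sset n c))
              = (Sset n c ∩ D).offDiag from by
            ext z
            simp only [Finset.mem_filter, Finset.mem_offDiag, Finset.mem_inter]
            tauto]
          rw [Finset.sum_const, nsmul_eq_mul, mul_comm]
  -- value of the pair sum
  have hDcard : D.card = n - 1 := by
    rw [hD, Finset.card_erase_of_mem (Finset.mem_univ _), Finset.card_univ, Fintype.card_fin]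
  have en1 : ((n - 1 : ℕ) : ℝ) = (n:ℝ) - 1 := by
    rw [Nat.cast_sub (by omega : 1 ≤ n)]; norm_num
  have en2 : ((n - 2 : ℕ) : ℝ) = (n:ℝ) - 2 := by
    rw [Nat.cast_sub (by omega : 2 ≤ n)]; norm_num
  have hnat : (n-1)*(n-1) - (n-1) = (n-1)*(n-2) := by
    obtain ⟨m, rfl⟩ : ∃ m, n = m + 3 := ⟨n - 3, by omega⟩
    have e1 : m + 3 - 1 = m + 2 := by omega
    have e2 : m + 3 - 2 = m + 1 := by omega
    rw [e1, e2]
    have h1 : (m+2)*(m+2) = (m+2)*(m+1) + (m+2) := by ring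
    omega
  have hpairval : ∑ z ∈ D.offDiag, Biv n θ z.1 z.2 = ((n:ℝ)-1) * ((n:ℝ)-2) * p^2 := by
    rw [Finset.sum_congr rfl hbiv', Finset.sum_const, nsmul_eq_mul,
      Finset.offDiag_card, hDcard, hnat, Nat.cast_mul, en1, en2]
  -- pointwise bound on the event
  have hpoint : ∀ c ∈ Finset.univ.filter
      (fun c : Fin n → Bool => k ≤ (Finset.univ.filter (fun i => c i = true)).card),
      ((k:ℝ)-1) * ((k:ℝ)-2) ≤ (((Sset n c ∩ D).offDiag.card : ℕ) : ℝ) := by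
    intro c hc
    rw [Finset.mem_filter] at hc
    have hkcard : k ≤ (Sset n c).card := hc.2
    have hinter : Sset n c ∩ D = (Sset n c).erase L := by
      rw [hD]; ext x
      simp only [Finset.mem_inter, Finset.mem_erase, Finset.mem_univ, and_true, true_and]
      tauto
    have ht : k - 1 ≤ (Sset n c ∩ D).card := by
      rw [hinter]
      have := Finset.pred_card_le_card_erase (s := Sset n c) (a := L)
      omega
    have hmono := sq_sub_mono ht
    have hoff : (Sset n c ∩ D).offDiag.card = ((Sset n c ∩ D).card) * ((Sset n c ∩ D).card)
        - (Sset n c ∩ D).card := Finset.offDiag_card _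
    have hknat : (k-1)*(k-1) - (k-1) = (k-1)*(k-2) := by
      obtain ⟨m, rfl⟩ : ∃ m, k = m + 3 := ⟨k - 3, by omega⟩
      have e1 : m + 3 - 1 = m + 2 := by omega
      have e2 : m + 3 - 2 = m + 1 := by omega
      rw [e1, e2]
      have h1 : (m+2)*(m+2) = (m+2)*(m+1) + (m+2) := by ring
      omega
    have h3 : (k-1)*(k-2) ≤ (Sset n c ∩ D).offDiag.card := by
      rw [hoff, ← hknat]
      exact hmono
    have h4 : (((k-1)*(k-2) : ℕ) : ℝ) ≤ (((Sset n c ∩ D).offDiag.card : ℕ) : ℝ) := by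
      exact_mod_cast h3
    have ek1 : ((k - 1 : ℕ) : ℝ) = (k:ℝ) - 1 := by
      rw [Nat.cast_sub (by omega : 1 ≤ k)]; norm_num
    have ek2 : ((k - 2 : ℕ) : ℝ) = (k:ℝ) - 2 := by
      rw [Nat.cast_sub (by omega : 2 ≤ k)]; norm_num
    rw [Nat.cast_mul, ek1, ek2] at h4
    exact h4
  -- assemble
  have hmain : probGE n θ k * (((k:ℝ)-1) * ((k:ℝ)-2)) ≤ ((n:ℝ)-1) * ((n:ℝ)-2) * p^2 := by
    rw [← hpairval, key, probGE, Finset.sum_mul]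
    calc ∑ c ∈ Finset.univ.filter
          (fun c : Fin n → Bool => k ≤ (Finset.univ.filter (fun i => c i = true)).card),
          θ c * (((k:ℝ)-1) * ((k:ℝ)-2))
        ≤ ∑ c ∈ Finset.univ.filter
          (fun c : Fin n → Bool => k ≤ (Finset.univ.filter (fun i => c i = true)).card),
          θ c * (((Sset n c ∩ D).offDiag.card : ℕ) : ℝ) := by
          apply Finset.sum_le_sum
          intro c hc
          exact mul_le_mul_of_nonneg_left (hpoint c hc) (hnn c)
      _ ≤ ∑ c : Fin n → Bool, θ c * (((Sset n c ∩ D).offDiag.card : ℕ) : ℝ) := by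
          apply Finset.sum_le_sum_of_subset_of_nonneg (Finset.filter_subset _ _)
          intro c _ _
          exact mul_nonneg (hnn c) (Nat.cast_nonneg _)
  rw [le_div_iff₀ (by nlinarith : (0:ℝ) < ((k:ℝ)-1) * ((k:ℝ)-2) / 2)]
  nlinarith [hmain]

theorem stmt_18 (n k : ℕ) (hn : 3 ≤ n) (hk1 : 1 ≤ k) (hkn : k ≤ n)
    (p q : ℝ) (hp0 : 0 < p) (hp1 : p ≤ 1 / ((n : ℝ) - 1)) (hq0 : 0 < q) (hq1 : q < 1)
    (hcase : (3 ≤ k ∧ ((n : ℝ) - 2) * p ≤ q) ∨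
      (p ≤ q ∧ q < ((n : ℝ) - 2) * p ∧ ⌈2 + ((n : ℝ) - 2) * p / q⌉ ≤ (k : ℤ) ∧ k ≤ n)) :
    IsGreatest
      {x : ℝ | ∃ θ : (Fin n → Bool) → ℝ,
        PairwiseIndep n (fun i : Fin n => if (i : ℕ) < n - 1 then p else q) θ ∧
          probGE n θ k = x}
      ((((n : ℝ) - 1) * ((n : ℝ) - 2) / 2 * p ^ 2) / (((k : ℝ) - 1) * ((k : ℝ) - 2) / 2)) := by
  have hn1pos : (0:ℝ) < (n:ℝ) - 1 := by
    have : (3:ℝ) ≤ (n:ℝ) := by exact_mod_cast hn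
    linarith
  have hk3 : 3 ≤ k := by
    rcases hcase with ⟨h3, _⟩ | ⟨hpq, hql, hceil, _⟩
    · exact h3
    · have hr : 1 < ((n:ℝ)-2)*p/q := by
        rw [lt_div_iff₀ hq0]; linarith
      have h2 : (3:ℝ) < 2 + ((n:ℝ)-2)*p/q := by linarith
      have h3 : (3:ℤ) < ⌈2 + ((n:ℝ)-2)*p/q⌉ := by
        rw [Int.lt_ceil]; exact_mod_cast h2
      have : (3:ℤ) < (k:ℤ) := lt_of_lt_of_le h3 hceil
      omega
  have hkey : ((n:ℝ)-2)*p ≤ q*((k:ℝ)-2) := by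
    rcases hcase with ⟨h3, hge⟩ | ⟨hpq, hql, hceil, _⟩
    · have hk3R : (3:ℝ) ≤ (k:ℝ) := by exact_mod_cast h3
      nlinarith [hq0.le]
    · have hle : (2 + ((n:ℝ)-2)*p/q) ≤ (k:ℝ) := by
        have h1 := Int.le_ceil (2 + ((n:ℝ)-2)*p/q)
        have h2 : ((⌈2 + ((n:ℝ)-2)*p/q⌉ : ℤ) : ℝ) ≤ ((k:ℤ) : ℝ) := by
          exact_mod_cast hceil
        push_cast at h2
        linarith
      have h2 : ((n:ℝ)-2)*p/q ≤ (k:ℝ)-2 := by linarith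
      calc ((n:ℝ)-2)*p = (((n:ℝ)-2)*p/q)*q := by field_simp
        _ ≤ ((k:ℝ)-2)*q := mul_le_mul_of_nonneg_right h2 hq0.le
        _ = q*((k:ℝ)-2) := by ring
  have hp1' : ((n:ℝ)-1)*p ≤ 1 := by
    have h := (le_div_iff₀ hn1pos).mp hp1
    linarith
  constructor
  · obtain ⟨θ, h1, h2⟩ := construction n k hn hk3 hkn p q hp0 hp1' hq0 hq1 hkey
    exact ⟨θ, h1, h2⟩
  · rintro x ⟨θ, hθ, rfl⟩
    exact upper n k hn hk3 p q hp0.le θ hθ
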